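/- arXiv:2410.09361 — 2 statements merged into one kernel-verified Lean document; each statement's English description precedes it below -/
import Mathlib

section
/- (Performance Difference Lemma, finite-horizon version) For two policies π and π_b on a finite MDP with horizon H, the difference in expected return satisfies ρ(π) − ρ(π_b) = Σ_{h=0}^{H-1} E_{(s,a) ∼ d_h^π} [ A^{π_b}_h(s,a) ], where d_h^π is the state-action distribution at step h under π and A^{π_b}_h(s,a) = Q^{π_b}_h(s,a) − V^{π_b}_h(s) is the advantage of π_b at step h. -/
open Finset

/-- Finite-horizon value function defined by the number of remaining steps:
`finV P R π n s` is the value at state `s` with `n` steps to go. -/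
noncomputable def finV {S A : Type*} [Fintype S] [Fintype A]
    (P : S → A → S → ℝ) (R : S → A → ℝ) (π : S → A → ℝ) : ℕ → S → ℝ
  | 0 => fun _ => 0
  | (n + 1) => fun s => ∑ a, π s a * (R s a + ∑ s', P s a s' * finV P R π n s')

/-- Step-`h` action-value with `n` steps remaining after taking the action,
i.e. `Q` with `n+1` steps to go. -/
noncomputable def finQ {S A : Type*} [Fintype S] [Fintype A]
    (P : S → A → S → ℝ) (R : S → A → ℝ) (π : S → A → ℝ) (n : ℕ) (s : S) (a : A) : ℝ :=
  R s a + ∑ s', P s a s' * finV P R π n s'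

/-- State distribution at step `h` under policy `π` starting from `μ0`. -/
noncomputable def stateDist {S A : Type*} [Fintype S] [Fintype A]
    (P : S → A → S → ℝ) (π : S → A → ℝ) (μ0 : S → ℝ) : ℕ → S → ℝ
  | 0 => μ0
  | (h + 1) => fun s' => ∑ s, ∑ a, stateDist P π μ0 h s * π s a * P s a s'

lemma sum_swap3 {S A : Type*} [Fintype S] [Fintype A] (f : S → A → S → ℝ) :
    ∑ s, ∑ a, ∑ s', f s a s' = ∑ s', ∑ s, ∑ a, f s a s' := by
  calc ∑ s, ∑ a, ∑ s', f s a s' = ∑ s, ∑ s', ∑ a, f s a s' :=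
        Finset.sum_congr rfl (fun s _ => by rw [Finset.sum_comm])
    _ = ∑ s', ∑ s, ∑ a, f s a s' := by rw [Finset.sum_comm]

lemma triple_factor {S A : Type*} [Fintype S] [Fintype A]
    (g : S → A → S → ℝ) (V : S → ℝ) :
    ∑ s, ∑ a, ∑ s', g s a s' * V s' = ∑ s', (∑ s, ∑ a, g s a s') * V s' := by
  rw [sum_swap3 (fun s a s' => g s a s' * V s')]
  apply Finset.sum_congr rfl; intro s' _
  rw [Finset.sum_mul]
  apply Finset.sum_congr rfl; intro s _
  rw [Finset.sum_mul]

lemma stateDist_shift {S A : Type*} [Fintype S] [Fintype A]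
    (P : S → A → S → ℝ) (π : S → A → ℝ) (μ0 : S → ℝ) (h : ℕ) :
    stateDist P π μ0 (h + 1) =
      stateDist P π (fun s' => ∑ s, ∑ a, μ0 s * π s a * P s a s') h := by
  induction h with
  | zero => rfl
  | succ h ih =>
    show (fun s' => ∑ s, ∑ a, stateDist P π μ0 (h+1) s * π s a * P s a s') = _
    rw [ih]; rfl

lemma finV_expand {S A : Type*} [Fintype S] [Fintype A]
    (P : S → A → S → ℝ) (R : S → A → ℝ) (p : S → A → ℝ) (μ0 : S → ℝ) (H : ℕ) :
    ∑ s, μ0 s * finV P R p (H + 1) s =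
      (∑ s, ∑ a, μ0 s * p s a * R s a) +
        ∑ s', (∑ s, ∑ a, μ0 s * p s a * P s a s') * finV P R p H s' := by
  have hpt : ∀ s, μ0 s * finV P R p (H + 1) s =
      (∑ a, μ0 s * p s a * R s a) +
        ∑ a, ∑ s', μ0 s * p s a * P s a s' * finV P R p H s' := by
    intro s
    rw [show finV P R p (H+1) s
        = ∑ a, p s a * (R s a + ∑ s', P s a s' * finV P R p H s') from rfl,
      Finset.mul_sum, ← Finset.sum_add_distrib]
    apply Finset.sum_congr rfl; intro a _
    rw [show μ0 s * (p s a * (R s a + ∑ s', P s a s' * finV P R p H s'))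
        = μ0 s * p s a * R s a
          + μ0 s * p s a * ∑ s', P s a s' * finV P R p H s' by ring]
    congr 1
    rw [Finset.mul_sum]
    apply Finset.sum_congr rfl; intro s' _; ring
  calc ∑ s, μ0 s * finV P R p (H + 1) s
      = ∑ s, ((∑ a, μ0 s * p s a * R s a)
          + ∑ a, ∑ s', μ0 s * p s a * P s a s' * finV P R p H s') :=
        Finset.sum_congr rfl (fun s _ => hpt s)
    _ = (∑ s, ∑ a, μ0 s * p s a * R s a)
          + ∑ s, ∑ a, ∑ s', μ0 s * p s a * P s a s' * finV P R p H s' :=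
        Finset.sum_add_distrib
    _ = _ := by
        congr 1
        exact triple_factor (fun s a s' => μ0 s * p s a * P s a s') (finV P R p H)

lemma pdl_aux {S A : Type*} [Fintype S] [Fintype A]
    (P : S → A → S → ℝ) (R : S → A → ℝ)
    (π πb : S → A → ℝ) (hπ1 : ∀ s, ∑ a, π s a = 1) :
    ∀ (H : ℕ) (μ0 : S → ℝ),
    (∑ s, μ0 s * finV P R π H s) - (∑ s, μ0 s * finV P R πb H s) =
      ∑ h ∈ range H, ∑ s, ∑ a,
        (stateDist P π μ0 h s * π s a) *
          (finQ P R πb (H - h - 1) s a - finV P R πb (H - h) s) := by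
  intro H
  induction H with
  | zero => intro μ0; simp [finV]
  | succ H ih =>
    intro μ0
    set μ1 : S → ℝ := fun s' => ∑ s, ∑ a, μ0 s * π s a * P s a s' with hμ1def
    rw [Finset.sum_range_succ']
    have hrest : (∑ h ∈ range H, ∑ s, ∑ a,
        (stateDist P π μ0 (h+1) s * π s a) *
          (finQ P R πb (H + 1 - (h+1) - 1) s a - finV P R πb (H + 1 - (h+1)) s)) =
        ∑ h ∈ range H, ∑ s, ∑ a,
        (stateDist P π μ1 h s * π s a) *
          (finQ P R πb (H - h - 1) s a - finV P R πb (H - h) s) := by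
      apply Finset.sum_congr rfl; intro h _
      rw [stateDist_shift P π μ0 h, show H + 1 - (h+1) = H - h by omega,
        ← hμ1def]
    rw [hrest, ← ih μ1]
    have h0 : (∑ s, ∑ a, (stateDist P π μ0 0 s * π s a) *
        (finQ P R πb (H + 1 - 0 - 1) s a - finV P R πb (H + 1 - 0) s)) =
        (∑ s, ∑ a, μ0 s * π s a * R s a) +
          (∑ s', μ1 s' * finV P R πb H s') -
          ∑ s, μ0 s * finV P R πb (H + 1) s := by
      have hpt : ∀ s a, (μ0 s * π s a) *
          (finQ P R πb H s a - finV P R πb (H + 1) s) =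
          μ0 s * π s a * R s a
            + (∑ s', μ0 s * π s a * P s a s' * finV P R πb H s')
            - μ0 s * π s a * finV P R πb (H + 1) s := by
        intro s a
        rw [show finQ P R πb H s a
            = R s a + ∑ s', P s a s' * finV P R πb H s' from rfl]
        rw [show (μ0 s * π s a) *
            ((R s a + ∑ s', P s a s' * finV P R πb H s') - finV P R πb (H+1) s)
            = μ0 s * π s a * R s a
              + μ0 s * π s a * (∑ s', P s a s' * finV P R πb H s')
              - μ0 s * π s a * finV P R πb (H + 1) s by ring]
        congr 2
        rw [Finset.mul_sum]
        apply Finset.sum_congr rfl; intro s' _; ring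
      calc (∑ s, ∑ a, (stateDist P π μ0 0 s * π s a) *
            (finQ P R πb (H + 1 - 0 - 1) s a - finV P R πb (H + 1 - 0) s))
          = ∑ s, ∑ a, (μ0 s * π s a * R s a
              + (∑ s', μ0 s * π s a * P s a s' * finV P R πb H s')
              - μ0 s * π s a * finV P R πb (H + 1) s) := by
            apply Finset.sum_congr rfl; intro s _
            apply Finset.sum_congr rfl; intro a _
            exact hpt s a
        _ = (∑ s, ∑ a, μ0 s * π s a * R s a)
              + (∑ s, ∑ a, ∑ s', μ0 s * π s a * P s a s' * finV P R πb H s')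
              - ∑ s, ∑ a, μ0 s * π s a * finV P R πb (H + 1) s := by
            simp only [Finset.sum_add_distrib, Finset.sum_sub_distrib]
        _ = _ := by
            congr 1
            · congr 1
              exact triple_factor (fun s a s' => μ0 s * π s a * P s a s')
                (finV P R πb H)
            · apply Finset.sum_congr rfl; intro s _
              rw [show (∑ a, μ0 s * π s a * finV P R πb (H+1) s)
                  = (∑ a, π s a) * (μ0 s * finV P R πb (H+1) s) by
                rw [Finset.sum_mul]
                exact Finset.sum_congr rfl (fun a _ => by ring), hπ1 s, one_mul]
    rw [h0, finV_expand P R π μ0 H]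
    ring

/-- Performance-difference lemma (finite horizon `H`):
`ρ(π) − ρ(π_b) = ∑_{h<H} E_{(s,a)∼d_h^π}[Q^{π_b}_h(s,a) − V^{π_b}_h(s)]`,
where step-`h` values of the behavior policy are the values with `H−h` steps to go. -/
theorem performance_difference_finite_horizon {S A : Type*} [Fintype S] [Fintype A]
    (P : S → A → S → ℝ) (R : S → A → ℝ) (μ0 : S → ℝ)
    (π πb : S → A → ℝ) (H : ℕ)
    (hP0 : ∀ s a s', 0 ≤ P s a s') (hP1 : ∀ s a, ∑ s', P s a s' = 1)
    (hπ0 : ∀ s a, 0 ≤ π s a) (hπ1 : ∀ s, ∑ a, π s a = 1)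
    (hπb0 : ∀ s a, 0 ≤ πb s a) (hπb1 : ∀ s, ∑ a, πb s a = 1)
    (hμ0 : ∀ s, 0 ≤ μ0 s) (hμ1 : ∑ s, μ0 s = 1) :
    (∑ s, μ0 s * finV P R π H s) - (∑ s, μ0 s * finV P R πb H s) =
      ∑ h ∈ range H, ∑ s, ∑ a,
        (stateDist P π μ0 h s * π s a) *
          (finQ P R πb (H - h - 1) s a - finV P R πb (H - h) s) := by
  exact pdl_aux P R π πb hπ1 H μ0
end

section
/- (McDiarmid / bounded differences inequality) Let X_1,…,X_n be independent random variables with X_i ∈ 𝒳_i, and let f : 𝒳_1 × ⋯ × 𝒳_n → ℝ satisfy the bounded differences property with constants c_1,…,c_n: changing the i-th coordinate changes f by at most c_i. Then for all ε > 0, P(f(X) − E[f(X)] ≥ ε) ≤ exp(−2ε² / Σ_i c_i²). -/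
open MeasureTheory ProbabilityTheory
open Real


/-- Key scalar inequality for Hoeffding's lemma. -/
lemma mcd_log_le {p : ℝ} (hp0 : 0 ≤ p) (hp1 : p ≤ 1) (h : ℝ) :
    Real.log (1 - p + p * Real.exp h) ≤ p * h + h ^ 2 / 8 := by
  set D : ℝ → ℝ := fun x => 1 - p + p * Real.exp x with hD
  have hDpos : ∀ x, 0 < D x := by
    intro x
    rcases eq_or_lt_of_le hp0 with h0 | h0
    · simp [hD, ← h0]
    · have : 0 < p * Real.exp x := mul_pos h0 (exp_pos x)
      have : 0 ≤ 1 - p := by linarith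
      simp only [hD]; positivity
  set φ : ℝ → ℝ := fun x => p * x + x ^ 2 / 8 - Real.log (D x) with hφdef
  set φ' : ℝ → ℝ := fun x => p + x / 4 - p * Real.exp x / D x with hφ'def
  have hd1 : ∀ x, HasDerivAt φ (φ' x) x := by
    intro x
    have hDd : HasDerivAt D (p * Real.exp x) x :=
      (((Real.hasDerivAt_exp x).const_mul p)).const_add (1 - p)
    have hlog : HasDerivAt (fun y => Real.log (D y)) (p * Real.exp x / D x) x :=
      hDd.log (ne_of_gt (hDpos x))
    have h1 : HasDerivAt (fun y : ℝ => p * y + y ^ 2 / 8) (p + x * 2 / 8 * 1) x := by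
      have := ((hasDerivAt_id x).const_mul p).add
        (((hasDerivAt_pow 2 x)).div_const 8)
      exact this.congr_deriv (by rw [show (2:ℕ) - 1 = 1 from rfl]; ring)
    have := h1.sub hlog
    refine this.congr_deriv ?_
    ring
  have hd2 : ∀ x, HasDerivAt φ' (1/4 - p * (1 - p) * Real.exp x / (D x) ^ 2) x := by
    intro x
    have hDd : HasDerivAt D (p * Real.exp x) x :=
      (((Real.hasDerivAt_exp x).const_mul p)).const_add (1 - p)
    have hnum : HasDerivAt (fun y => p * Real.exp y) (p * Real.exp x) x :=
      (Real.hasDerivAt_exp x).const_mul p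
    have hdiv : HasDerivAt (fun y => p * Real.exp y / D y)
        ((p * Real.exp x * D x - p * Real.exp x * (p * Real.exp x)) / (D x) ^ 2) x :=
      hnum.div hDd (ne_of_gt (hDpos x))
    have h1 : HasDerivAt (fun y : ℝ => p + y / 4) (1/4) x := by
      simpa using ((hasDerivAt_id x).div_const 4).const_add p
    have := h1.sub hdiv
    refine this.congr_deriv ?_
    have hne : D x ≠ 0 := ne_of_gt (hDpos x)
    have hDx : D x = 1 - p + p * Real.exp x := rfl
    rw [hDx]
    ring
  have hφ'' : ∀ x, 0 ≤ 1/4 - p * (1 - p) * Real.exp x / (D x) ^ 2 := by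
    intro x
    have hDx : D x = 1 - p + p * Real.exp x := rfl
    rw [sub_nonneg, div_le_iff₀ (pow_pos (hDpos x) 2), hDx]
    nlinarith [sq_nonneg ((1 - p) - p * Real.exp x)]
  have hφ'mono : Monotone φ' :=
    monotone_of_deriv_nonneg (fun x => (hd2 x).differentiableAt)
      (fun x => by rw [(hd2 x).deriv]; exact hφ'' x)
  have hφ'0 : φ' 0 = 0 := by simp [hφ'def, hD]
  have hcont : Continuous φ := by
    have : Differentiable ℝ φ := fun x => (hd1 x).differentiableAt
    exact this.continuous
  have hφ0 : φ 0 = 0 := by simp [hφdef, hD]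
  have key : ∀ x, 0 ≤ φ x := by
    intro x
    rcases le_total 0 x with hx | hx
    · have hmono : MonotoneOn φ (Set.Ici 0) := by
        apply monotoneOn_of_deriv_nonneg (convex_Ici 0) (hcont.continuousOn)
        · intro y hy
          exact (hd1 y).differentiableAt.differentiableWithinAt
        · intro y hy
          rw [(hd1 y).deriv]
          rw [interior_Ici] at hy
          have := hφ'mono (le_of_lt hy)
          rw [hφ'0] at this
          exact this
      have := hmono (Set.self_mem_Ici) hx hx
      rwa [hφ0] at this
    · have hanti : AntitoneOn φ (Set.Iic 0) := by
        apply antitoneOn_of_deriv_nonpos (convex_Iic 0) (hcont.continuousOn)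
        · intro y hy
          exact (hd1 y).differentiableAt.differentiableWithinAt
        · intro y hy
          rw [(hd1 y).deriv]
          rw [interior_Iic] at hy
          have := hφ'mono (le_of_lt hy)
          rw [hφ'0] at this
          exact this
      have := hanti hx (Set.self_mem_Iic) hx
      rwa [hφ0] at this
  have := key h
  simp only [hφdef, hD] at this ⊢
  linarith



lemma mcd_hoeffding_scalar {p : ℝ} (hp0 : 0 ≤ p) (hp1 : p ≤ 1) (h : ℝ) :
    (1 - p) * Real.exp (-(p * h)) + p * Real.exp ((1 - p) * h)
      ≤ Real.exp (h ^ 2 / 8) := by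
  have hDpos : 0 < 1 - p + p * Real.exp h := by
    rcases eq_or_lt_of_le hp0 with h0 | h0
    · simp [← h0]
    · have h1 : 0 < p * Real.exp h := mul_pos h0 (exp_pos h)
      have h2 : 0 ≤ 1 - p := by linarith
      linarith
  have key : (1 - p) * Real.exp (-(p * h)) + p * Real.exp ((1 - p) * h)
      = Real.exp (-(p * h)) * (1 - p + p * Real.exp h) := by
    have he : Real.exp ((1 - p) * h) = Real.exp (-(p * h)) * Real.exp h := by
      rw [← Real.exp_add]; ring_nf
    rw [he]; ring
  rw [key, ← Real.exp_log hDpos, ← Real.exp_add, Real.exp_le_exp]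
  have := mcd_log_le hp0 hp1 h
  linarith

lemma mcd_nonempty {δ : Type*} [MeasurableSpace δ] (m : Measure δ)
    [IsProbabilityMeasure m] : Nonempty δ := by
  by_contra hne
  have h1 : (Set.univ : Set δ) = ∅ := Set.univ_eq_empty_iff.2 (not_nonempty_iff.1 hne)
  have h2 : m Set.univ = 1 := measure_univ
  rw [h1] at h2
  simp at h2

lemma mcd_integrable {δ : Type*} [MeasurableSpace δ] {m : Measure δ}
    [IsFiniteMeasure m] {h : δ → ℝ} (hm : AEStronglyMeasurable h m) {C : ℝ}
    (hC : ∀ x, |h x| ≤ C) : Integrable h m :=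
  Integrable.mono' (integrable_const C) hm
    (Filter.Eventually.of_forall (by simpa [Real.norm_eq_abs] using hC))

/-- Hoeffding's lemma (integral form). -/
lemma mcd_hoeffding_int {α : Type*} [MeasurableSpace α] (ν : Measure α)
    [IsProbabilityMeasure ν] {Y : α → ℝ} (hY : Measurable Y) {a b : ℝ}
    (hab : ∀ x, Y x ∈ Set.Icc a b) (h0 : ∫ x, Y x ∂ν = 0) (t : ℝ) :
    ∫ x, Real.exp (t * Y x) ∂ν ≤ Real.exp (t ^ 2 * (b - a) ^ 2 / 8) := by
  have hne : Nonempty α := mcd_nonempty ν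
  obtain ⟨x₀⟩ := hne
  have hle : a ≤ b := le_trans (hab x₀).1 (hab x₀).2
  have hYbd : ∀ x, |Y x| ≤ max |a| |b| := fun x =>
    abs_le_max_abs_abs (hab x).1 (hab x).2
  have hYint : Integrable Y ν := mcd_integrable hY.aestronglyMeasurable hYbd
  have ha0 : a ≤ 0 := by
    have h1 : ∫ _ : α, a ∂ν ≤ ∫ x, Y x ∂ν :=
      integral_mono (integrable_const a) hYint (fun x => (hab x).1)
    rwa [integral_const, probReal_univ, smul_eq_mul, one_mul,
      h0] at h1
  have hb0 : 0 ≤ b := by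
    have h1 : ∫ x, Y x ∂ν ≤ ∫ _ : α, b ∂ν :=
      integral_mono hYint (integrable_const b) (fun x => (hab x).2)
    rwa [integral_const, probReal_univ, smul_eq_mul, one_mul,
      h0] at h1
  rcases eq_or_lt_of_le hle with heq | hlt
  · -- a = b, hence a = b = 0 and Y = 0
    have ha : a = 0 := le_antisymm ha0 (heq ▸ hb0)
    have hb : b = 0 := by rw [← heq, ha]
    have hY0 : ∀ x, Y x = 0 := fun x =>
      le_antisymm (hb ▸ (hab x).2) (ha ▸ (hab x).1)
    simp only [hY0, mul_zero, Real.exp_zero]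
    rw [integral_const, probReal_univ, smul_eq_mul, one_mul]
    exact Real.one_le_exp (by positivity)
  · -- a < b
    set c1 : ℝ := (b * Real.exp (t * a) - a * Real.exp (t * b)) / (b - a) with hc1
    set c2 : ℝ := (Real.exp (t * b) - Real.exp (t * a)) / (b - a) with hc2
    have hba : (0:ℝ) < b - a := by linarith
    have hkey : ∀ x, Real.exp (t * Y x) ≤ c1 + c2 * Y x := by
      intro x
      have h1 := (hab x).1
      have h2 := (hab x).2
      have hcvx := convexOn_exp.2 (Set.mem_univ (t * a)) (Set.mem_univ (t * b))
        (show (0:ℝ) ≤ (b - Y x) / (b - a) from div_nonneg (by linarith) hba.le)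
        (show (0:ℝ) ≤ (Y x - a) / (b - a) from div_nonneg (by linarith) hba.le)
        (show (b - Y x) / (b - a) + (Y x - a) / (b - a) = 1 by
          rw [← add_div, div_eq_one_iff_eq hba.ne']; ring)
      simp only [smul_eq_mul] at hcvx
      have he : (b - Y x) / (b - a) * (t * a) + (Y x - a) / (b - a) * (t * b)
          = t * Y x := by field_simp; ring
      rw [he] at hcvx
      have he2 : (b - Y x) / (b - a) * Real.exp (t * a)
          + (Y x - a) / (b - a) * Real.exp (t * b) = c1 + c2 * Y x := by
        rw [hc1, hc2]
        field_simp
        ring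
      linarith [hcvx, he2.symm.le]
    have hexp_int : Integrable (fun x => Real.exp (t * Y x)) ν := by
      apply mcd_integrable ((hY.const_mul t).exp).aestronglyMeasurable
        (C := Real.exp (|t| * max |a| |b|))
      intro x
      rw [abs_of_pos (exp_pos _), Real.exp_le_exp]
      calc t * Y x ≤ |t * Y x| := le_abs_self _
        _ = |t| * |Y x| := abs_mul t (Y x)
        _ ≤ |t| * max |a| |b| := by
            exact mul_le_mul_of_nonneg_left (hYbd x) (abs_nonneg t)
    have hint2 : Integrable (fun x => c1 + c2 * Y x) ν :=
      (integrable_const c1).add (hYint.const_mul c2)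
    have hle2 : ∫ x, Real.exp (t * Y x) ∂ν ≤ c1 := by
      calc ∫ x, Real.exp (t * Y x) ∂ν ≤ ∫ x, c1 + c2 * Y x ∂ν :=
            integral_mono hexp_int hint2 hkey
        _ = c1 + c2 * ∫ x, Y x ∂ν := by
            rw [integral_add (integrable_const c1) (hYint.const_mul c2),
              integral_const, probReal_univ, smul_eq_mul,
              one_mul, integral_const_mul]
        _ = c1 := by rw [h0]; ring
    refine hle2.trans ?_
    -- now c1 ≤ exp (t²(b-a)²/8)
    set p : ℝ := -a / (b - a) with hp
    set h : ℝ := t * (b - a) with hh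
    have hp0 : 0 ≤ p := by
      apply div_nonneg (by linarith) (le_of_lt hba)
    have hp1 : p ≤ 1 := by
      rw [hp, div_le_one hba]; linarith
    have hscalar := mcd_hoeffding_scalar hp0 hp1 h
    have e1 : -(p * h) = t * a := by rw [hp, hh]; field_simp
    have e2 : (1 - p) * h = t * b := by rw [hp, hh]; field_simp; ring
    have e3 : (1 : ℝ) - p = b / (b - a) := by rw [hp]; field_simp; ring
    have e4 : h ^ 2 / 8 = t ^ 2 * (b - a) ^ 2 / 8 := by rw [hh]; ring
    rw [e1, e2, e3, e4] at hscalar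
    have e5 : c1 = b / (b - a) * Real.exp (t * a) + p * Real.exp (t * b) := by
      rw [hc1, hp]
      field_simp
      ring
    rw [e5]
    exact hscalar





section helpers
lemma mcd_abs_integral_le {δ : Type*} [MeasurableSpace δ] (m : Measure δ)
    [IsProbabilityMeasure m] (h : δ → ℝ) {C : ℝ} (hC : ∀ x, |h x| ≤ C) :
    |∫ x, h x ∂m| ≤ C := by
  have h1 := norm_integral_le_of_norm_le_const (μ := m) (f := h) (C := C)
    (Filter.Eventually.of_forall (by simpa [Real.norm_eq_abs] using hC))
  simpa [Real.norm_eq_abs, measure_univ] using h1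

lemma mcd_insertNth_update {n : ℕ} {α : Fin (n + 1) → Type*} (i : Fin (n + 1))
    (x : α i) (f : ∀ j, α (i.succAbove j)) (j : Fin n) (x' : α (i.succAbove j)) :
    i.insertNth x (Function.update f j x')
      = Function.update (i.insertNth x f) (i.succAbove j) x' := by
  funext k
  by_cases hk : k = i
  · subst hk
    rw [Fin.insertNth_apply_same,
      Function.update_of_ne (Fin.succAbove_ne k j).symm, Fin.insertNth_apply_same]
  · obtain ⟨m, rfl⟩ := Fin.exists_succAbove_eq hk
    rcases eq_or_ne m j with rfl | hmj
    · rw [Fin.insertNth_apply_succAbove, Function.update_self, Function.update_self]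
    · rw [Fin.insertNth_apply_succAbove,
        Function.update_of_ne hmj,
        Function.update_of_ne (Fin.succAbove_right_injective.ne hmj),
        Fin.insertNth_apply_succAbove]
end helpers

universe u

lemma mcd_core (n : ℕ) : ∀ {𝒳 : Fin n → Type u} [inst : ∀ i, MeasurableSpace (𝒳 i)]
    (μ : ∀ i, Measure (𝒳 i)) [hpm : ∀ i, IsProbabilityMeasure (μ i)]
    (f : (∀ i, 𝒳 i) → ℝ), Measurable f → ∀ (c : Fin n → ℝ),
    (∀ (i : Fin n) (x : ∀ j, 𝒳 j) (x' : 𝒳 i),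
      |f x - f (Function.update x i x')| ≤ c i) →
    ∀ (B : ℝ), (∀ x, |f x| ≤ B) → ∀ (t : ℝ),
    ∫ x, Real.exp (t * (f x - ∫ y, f y ∂Measure.pi μ)) ∂Measure.pi μ
      ≤ Real.exp (t ^ 2 * (∑ i, c i ^ 2) / 8) := by
  induction n with
  | zero =>
    intro 𝒳 inst μ hpm f hf c hbd B hB t
    haveI : Subsingleton (∀ i : Fin 0, 𝒳 i) :=
      ⟨fun a b => funext fun i => i.elim0⟩
    have hconst : ∀ x : (∀ i, 𝒳 i), (∫ y, f y ∂Measure.pi μ) = f x := by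
      intro x
      have he : (fun y : (∀ i, 𝒳 i) => f y) = fun _ => f x :=
        funext fun y => by rw [Subsingleton.elim y x]
      rw [he, integral_const, probReal_univ, smul_eq_mul, one_mul]
    have h1 : ∫ x, Real.exp (t * (f x - ∫ y, f y ∂Measure.pi μ)) ∂Measure.pi μ
        = ∫ _ : (∀ i, 𝒳 i), (1:ℝ) ∂Measure.pi μ := by
      refine integral_congr_ae (Filter.Eventually.of_forall fun x => ?_)
      rw [hconst x]; simp
    rw [h1, integral_const, probReal_univ, smul_eq_mul, one_mul]
    exact Real.one_le_exp (le_of_eq (by simp))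
  | succ n ih =>
    intro 𝒳 inst μ hpm f hf c hbd B hB t
    set μ0 := μ (0 : Fin (n+1)) with hμ0
    set ν := Measure.pi (fun j => μ ((0 : Fin (n+1)).succAbove j)) with hν
    set e := MeasurableEquiv.piFinSuccAbove 𝒳 0 with he
    have hmp : MeasurePreserving e.symm (μ0.prod ν) (Measure.pi μ) :=
      (measurePreserving_piFinSuccAbove μ 0).symm e
    set g : 𝒳 0 × (∀ j, 𝒳 ((0 : Fin (n+1)).succAbove j)) → ℝ :=
      fun q => f (e.symm q) with hg
    have hes : ∀ (z : 𝒳 0) (y : ∀ j, 𝒳 ((0 : Fin (n+1)).succAbove j)),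
        e.symm (z, y) = (0 : Fin (n+1)).insertNth z y := fun z y => rfl
    have hgmeas : Measurable g := hf.comp e.symm.measurable
    have hgbd : ∀ q, |g q| ≤ B := fun q => hB _
    have htrans : ∀ (h : (∀ i, 𝒳 i) → ℝ),
        ∫ x, h x ∂Measure.pi μ = ∫ q, h (e.symm q) ∂(μ0.prod ν) :=
      fun h => (hmp.integral_comp' h).symm
    set F : (∀ j, 𝒳 ((0 : Fin (n+1)).succAbove j)) → ℝ :=
      fun y => ∫ z, g (z, y) ∂μ0 with hF
    have hFsm : StronglyMeasurable F :=
      hgmeas.stronglyMeasurable.integral_prod_left'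
    have hFbd : ∀ y, |F y| ≤ B := fun y =>
      mcd_abs_integral_le μ0 _ (fun z => hgbd (z, y))
    have hintg : ∀ y, Integrable (fun z => g (z, y)) μ0 := fun y =>
      mcd_integrable ((hgmeas.comp
        (measurable_id.prodMk measurable_const)).aestronglyMeasurable)
        (fun z => hgbd (z, y))
    have hFdiff : ∀ (j : Fin n) (y) (x' : 𝒳 ((0 : Fin (n+1)).succAbove j)),
        |F y - F (Function.update y j x')| ≤ c ((0 : Fin (n+1)).succAbove j) := by
      intro j y x'
      have h1 : F y - F (Function.update y j x')
          = ∫ z, (g (z, y) - g (z, Function.update y j x')) ∂μ0 :=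
        (integral_sub (hintg y) (hintg _)).symm
      rw [h1]
      apply mcd_abs_integral_le
      intro z
      have h2 : g (z, Function.update y j x')
          = f (Function.update ((0 : Fin (n+1)).insertNth z y)
              ((0 : Fin (n+1)).succAbove j) x') := by
        show f (e.symm (z, Function.update y j x')) = _
        rw [hes, mcd_insertNth_update]
      rw [h2]
      have h3 : g (z, y) = f ((0 : Fin (n+1)).insertNth z y) := by
        show f (e.symm (z, y)) = _
        rw [hes]
      rw [h3]
      exact hbd _ _ _
    set M := ∫ x, f x ∂Measure.pi μ with hM
    have hMbd : |M| ≤ B := mcd_abs_integral_le _ _ hB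
    have hexp_bd : ∀ (w : ℝ), |w| ≤ 2 * B → Real.exp (t * w) ≤ Real.exp (|t| * (2 * B)) := by
      intro w hw
      rw [Real.exp_le_exp]
      calc t * w ≤ |t * w| := le_abs_self _
        _ = |t| * |w| := abs_mul t w
        _ ≤ |t| * (2 * B) := mul_le_mul_of_nonneg_left hw (abs_nonneg t)
    have hgint : Integrable (fun q => Real.exp (t * (g q - M))) (μ0.prod ν) := by
      refine mcd_integrable
        (((hgmeas.sub measurable_const).const_mul t).exp.aestronglyMeasurable)
        (C := Real.exp (|t| * (2 * B))) (fun q => ?_)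
      rw [abs_of_pos (Real.exp_pos _)]
      refine hexp_bd _ ?_
      calc |g q - M| ≤ |g q| + |M| := abs_sub _ _
        _ ≤ B + B := add_le_add (hgbd q) hMbd
        _ = 2 * B := by ring
    have hfint : Integrable g (μ0.prod ν) :=
      mcd_integrable hgmeas.aestronglyMeasurable hgbd
    have hMF : M = ∫ y, F y ∂ν := by
      rw [hM, htrans f]
      exact integral_prod_symm _ hfint
    have step1 : ∫ x, Real.exp (t * (f x - M)) ∂Measure.pi μ
        = ∫ y, ∫ z, Real.exp (t * (g (z, y) - M)) ∂μ0 ∂ν := by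
      rw [htrans (fun x => Real.exp (t * (f x - M)))]
      exact integral_prod_symm _ hgint
    have hinner : ∀ y, ∫ z, Real.exp (t * (g (z, y) - M)) ∂μ0
        = Real.exp (t * (F y - M)) * ∫ z, Real.exp (t * (g (z, y) - F y)) ∂μ0 := by
      intro y
      rw [← integral_const_mul]
      refine integral_congr_ae (Filter.Eventually.of_forall fun z => ?_)
      simp only [← Real.exp_add]
      congr 1
      ring
    have hhoeff : ∀ y, ∫ z, Real.exp (t * (g (z, y) - F y)) ∂μ0
        ≤ Real.exp (t ^ 2 * (c 0) ^ 2 / 8) := by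
      intro y
      haveI : Nonempty (𝒳 0) := mcd_nonempty μ0
      set a : ℝ := sInf (Set.range fun z => g (z, y)) with ha
      have hrange_ne : (Set.range fun z => g (z, y)).Nonempty := Set.range_nonempty _
      have hbdd : BddBelow (Set.range fun z => g (z, y)) := by
        refine ⟨-B, ?_⟩
        rintro w ⟨z, rfl⟩
        exact (abs_le.1 (hgbd (z, y))).1
      have hpair : ∀ z z', g (z, y) - g (z', y) ≤ c 0 := by
        intro z z'
        have h2 : g (z, y) = f (Function.update ((0 : Fin (n+1)).insertNth z' y) 0 z) := by
          show f (e.symm (z, y)) = _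
          rw [hes z y, Fin.update_insertNth]
        have h3 : g (z', y) = f ((0 : Fin (n+1)).insertNth z' y) := by
          show f (e.symm (z', y)) = _
          rw [hes]
        have h4 := hbd 0 ((0 : Fin (n+1)).insertNth z' y) z
        rw [← h2, ← h3] at h4
        have := abs_le.1 h4
        linarith [this.1]
      have h1 : ∀ z, a ≤ g (z, y) := fun z => csInf_le hbdd ⟨z, rfl⟩
      have h2 : ∀ z, g (z, y) ≤ a + c 0 := by
        intro z
        have h5 : g (z, y) - c 0 ≤ a := by
          refine le_csInf hrange_ne ?_
          rintro w ⟨z', rfl⟩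
          linarith [hpair z z']
        linarith
      have h0 : ∫ z, (g (z, y) - F y) ∂μ0 = 0 := by
        rw [integral_sub (hintg y) (integrable_const _), integral_const,
          probReal_univ, smul_eq_mul, one_mul, hF, sub_self]
      have hY : Measurable (fun z => g (z, y) - F y) :=
        (hgmeas.comp (measurable_id.prodMk measurable_const)).sub measurable_const
      have hmain := mcd_hoeffding_int μ0 hY (a := a - F y) (b := a + c 0 - F y)
        (fun z => ⟨by linarith [h1 z], by linarith [h2 z]⟩) h0 t
      have heq : (a + c 0 - F y - (a - F y)) = c 0 := by ring
      rwa [heq] at hmain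
    have hnonneg : ∀ y, 0 ≤ Real.exp (t * (F y - M))
        * ∫ z, Real.exp (t * (g (z, y) - F y)) ∂μ0 := fun y =>
      mul_nonneg (Real.exp_pos _).le (integral_nonneg fun z => (Real.exp_pos _).le)
    have hFint : Integrable (fun y => Real.exp (t * (F y - M))) ν := by
      refine mcd_integrable
        (((hFsm.measurable.sub measurable_const).const_mul t).exp.aestronglyMeasurable)
        (C := Real.exp (|t| * (2 * B))) (fun y => ?_)
      rw [abs_of_pos (Real.exp_pos _)]
      refine hexp_bd _ ?_
      calc |F y - M| ≤ |F y| + |M| := abs_sub _ _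
        _ ≤ B + B := add_le_add (hFbd y) hMbd
        _ = 2 * B := by ring
    calc ∫ x, Real.exp (t * (f x - M)) ∂Measure.pi μ
        = ∫ y, ∫ z, Real.exp (t * (g (z, y) - M)) ∂μ0 ∂ν := step1
      _ = ∫ y, Real.exp (t * (F y - M))
            * ∫ z, Real.exp (t * (g (z, y) - F y)) ∂μ0 ∂ν :=
          integral_congr_ae (Filter.Eventually.of_forall hinner)
      _ ≤ ∫ y, Real.exp (t * (F y - M)) * Real.exp (t ^ 2 * (c 0) ^ 2 / 8) ∂ν := by
          refine integral_mono_of_nonneg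
            (Filter.Eventually.of_forall hnonneg)
            (hFint.mul_const _)
            (Filter.Eventually.of_forall fun y => ?_)
          exact mul_le_mul_of_nonneg_left (hhoeff y) (Real.exp_pos _).le
      _ = Real.exp (t ^ 2 * (c 0) ^ 2 / 8) * ∫ y, Real.exp (t * (F y - M)) ∂ν := by
          rw [integral_mul_const, mul_comm]
      _ ≤ Real.exp (t ^ 2 * (c 0) ^ 2 / 8)
            * Real.exp (t ^ 2 * (∑ j, (c ((0 : Fin (n+1)).succAbove j)) ^ 2) / 8) := by
          refine mul_le_mul_of_nonneg_left ?_ (Real.exp_pos _).le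
          have hIH := ih (μ := fun j => μ ((0 : Fin (n+1)).succAbove j)) F
            hFsm.measurable (fun j => c ((0 : Fin (n+1)).succAbove j)) hFdiff B hFbd t
          rw [hMF]
          exact hIH
      _ = Real.exp (t ^ 2 * (∑ i, c i ^ 2) / 8) := by
          rw [← Real.exp_add]
          congr 1
          rw [Fin.sum_univ_succAbove (fun i => c i ^ 2) 0]
          ring






/-- Bounded differences implies a global Lipschitz-type bound. -/
lemma mcd_diff_le {n : ℕ} {𝒳 : Fin n → Type*} (f : (∀ i, 𝒳 i) → ℝ) (c : Fin n → ℝ)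
    (hbd : ∀ (i : Fin n) (x : ∀ j, 𝒳 j) (x' : 𝒳 i),
      |f x - f (Function.update x i x')| ≤ c i)
    (x y : ∀ i, 𝒳 i) : |f x - f y| ≤ ∑ i, c i := by
  suffices H : ∀ s : Finset (Fin n), ∀ x y : (∀ i, 𝒳 i),
      (∀ i ∉ s, x i = y i) → |f x - f y| ≤ ∑ i ∈ s, c i by
    exact H Finset.univ x y (fun i hi => absurd (Finset.mem_univ i) hi)
  intro s
  induction s using Finset.induction_on with
  | empty =>
    intro x y hxy
    have : x = y := funext fun i => hxy i (Finset.notMem_empty i)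
    simp [this]
  | insert _ _ hi ih =>
    rename_i i s
    intro x y hxy
    set y' := Function.update y i (x i) with hy'
    have h1 : |f y' - f y| ≤ c i := by
      have := hbd i y (x i)
      rw [abs_sub_comm] at this
      exact this
    have h2 : |f x - f y'| ≤ ∑ j ∈ s, c j := by
      refine ih x y' fun j hj => ?_
      rcases eq_or_ne j i with rfl | hji
      · rw [hy', Function.update_self]
      · rw [hy', Function.update_of_ne hji]
        exact hxy j (by simp [hji, hj])
    calc |f x - f y| ≤ |f x - f y'| + |f y' - f y| := abs_sub_le _ _ _
      _ ≤ (∑ j ∈ s, c j) + c i := add_le_add h2 h1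
      _ = ∑ j ∈ insert i s, c j := by rw [Finset.sum_insert hi]; ring


/-- McDiarmid's bounded-differences inequality: if `f` has the bounded
differences property with constants `c i` and `X i` are independent, then
`P(f(X) − E[f(X)] ≥ ε) ≤ exp(−2ε²/∑ c i²)`. -/
theorem mcdiarmid_inequality {Ω : Type*} [MeasureSpace Ω]
    [IsProbabilityMeasure (ℙ : Measure Ω)]
    {n : ℕ} {𝒳 : Fin n → Type*} [∀ i, MeasurableSpace (𝒳 i)]
    (X : ∀ i, Ω → 𝒳 i) (hXmeas : ∀ i, Measurable (X i))
    (hindep : iIndepFun X ℙ)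
    (f : (∀ i, 𝒳 i) → ℝ) (hfmeas : Measurable f)
    (c : Fin n → ℝ)
    (hbd : ∀ (i : Fin n) (x : ∀ j, 𝒳 j) (x' : 𝒳 i),
      |f x - f (Function.update x i x')| ≤ c i)
    (ε : ℝ) (hε : 0 < ε) :
    (ℙ {ω | f (fun i => X i ω) - (∫ ω', f (fun i => X i ω') ∂ℙ) ≥ ε}).toReal ≤
      Real.exp (-2 * ε ^ 2 / ∑ i, (c i) ^ 2) := by
  have hΩ : Nonempty Ω := mcd_nonempty (ℙ : Measure Ω)
  obtain ⟨ω₀⟩ := hΩ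
  set x₀ : ∀ i, 𝒳 i := fun i => X i ω₀ with hx₀
  set B : ℝ := |f x₀| + ∑ i, c i with hB
  have hfB : ∀ x, |f x| ≤ B := by
    intro x
    have h1 := mcd_diff_le f c hbd x x₀
    calc |f x| = |f x₀ + (f x - f x₀)| := by ring_nf
      _ ≤ |f x₀| + |f x - f x₀| := abs_add_le _ _
      _ ≤ |f x₀| + ∑ i, c i := add_le_add_right h1 _
  have hXv : Measurable (fun ω i => X i ω) := measurable_pi_iff.2 hXmeas
  haveI : ∀ i, IsProbabilityMeasure ((ℙ : Measure Ω).map (X i)) :=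
    fun i => Measure.isProbabilityMeasure_map (hXmeas i).aemeasurable
  set Pm : Measure (∀ i, 𝒳 i) := Measure.pi (fun i => (ℙ : Measure Ω).map (X i)) with hPm
  have hmap : (ℙ : Measure Ω).map (fun ω i => X i ω) = Pm := by
    rw [hPm]
    refine (Measure.pi_eq (μ := fun i => (ℙ : Measure Ω).map (X i)) fun s hs => ?_).symm
    rw [Measure.map_apply hXv (MeasurableSet.univ_pi hs)]
    have hpre : (fun ω i => X i ω) ⁻¹' Set.pi Set.univ s = ⋂ i, X i ⁻¹' s i := by
      ext ω; simp [Set.mem_pi]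
    rw [hpre, hindep.meas_iInter fun i => ⟨s i, hs i, rfl⟩]
    refine Finset.prod_congr rfl fun i _ => ?_
    rw [Measure.map_apply (hXmeas i) (hs i)]
  have hEeq : (∫ ω', f (fun i => X i ω') ∂ℙ) = ∫ x, f x ∂Pm := by
    rw [← hmap, integral_map hXv.aemeasurable]
    exact hfmeas.aestronglyMeasurable
  set E : ℝ := ∫ x, f x ∂Pm with hE
  set S : ℝ := ∑ i, (c i) ^ 2 with hS
  have hSnn : 0 ≤ S := Finset.sum_nonneg fun i _ => sq_nonneg _
  rcases eq_or_lt_of_le hSnn with hS0 | hSpos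
  · -- S = 0 : f is constant
    have hc0 : ∀ i, c i = 0 := by
      intro i
      have := (Finset.sum_eq_zero_iff_of_nonneg
        (fun j _ => sq_nonneg (c j))).1 hS0.symm i (Finset.mem_univ i)
      exact pow_eq_zero_iff (n := 2) (by norm_num) |>.1 this
    have hconst : ∀ x y : (∀ i, 𝒳 i), f x = f y := by
      intro x y
      have h1 := mcd_diff_le f c hbd x y
      simp only [hc0, Finset.sum_const_zero] at h1
      have := abs_nonneg (f x - f y)
      have h2 : |f x - f y| = 0 := le_antisymm h1 this
      linarith [abs_eq_zero.1 h2]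
    have hset : {ω | f (fun i => X i ω) - (∫ ω', f (fun i => X i ω') ∂ℙ) ≥ ε} = ∅ := by
      ext ω
      simp only [Set.mem_setOf_eq, Set.mem_empty_iff_false, iff_false, not_le]
      have hint : (∫ ω', f (fun i => X i ω') ∂ℙ) = f (fun i => X i ω) := by
        have he : (fun ω' => f (fun i => X i ω')) = fun _ => f (fun i => X i ω) :=
          funext fun ω' => hconst _ _
        rw [he, integral_const, probReal_univ, smul_eq_mul, one_mul]
      rw [hint]
      linarith
    rw [hset]
    simp only [measure_empty, ENNReal.toReal_zero]
    positivity
  · -- S > 0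
    set t : ℝ := 4 * ε / S with ht
    have htpos : 0 < t := by positivity
    set W : Ω → ℝ := fun ω => f (fun i => X i ω) - E with hW
    have hWmeas : Measurable W := (hfmeas.comp hXv).sub measurable_const
    have hWbd : ∀ ω, |W ω| ≤ B + |E| := by
      intro ω
      calc |W ω| ≤ |f (fun i => X i ω)| + |E| := abs_sub _ _
        _ ≤ B + |E| := add_le_add_left (hfB _) _
    have hint : Integrable (fun ω => Real.exp (t * W ω)) ℙ := by
      refine mcd_integrable ((hWmeas.const_mul t).exp.aestronglyMeasurable)
        (C := Real.exp (|t| * (B + |E|))) (fun ω => ?_)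
      rw [abs_of_pos (Real.exp_pos _), Real.exp_le_exp]
      calc t * W ω ≤ |t * W ω| := le_abs_self _
        _ = |t| * |W ω| := abs_mul _ _
        _ ≤ |t| * (B + |E|) := mul_le_mul_of_nonneg_left (hWbd ω) (abs_nonneg t)
    have hmarkov := measure_ge_le_exp_mul_mgf (μ := (ℙ : Measure Ω)) (X := W) ε htpos.le hint
    have hsetW : {ω | f (fun i => X i ω) - (∫ ω', f (fun i => X i ω') ∂ℙ) ≥ ε}
        = {ω | ε ≤ W ω} := by
      ext ω
      simp only [Set.mem_setOf_eq, ge_iff_le, hW, hEeq]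
    have hmgf : mgf W ℙ t ≤ Real.exp (t ^ 2 * S / 8) := by
      have h1 : mgf W ℙ t = ∫ ω, Real.exp (t * W ω) ∂ℙ := rfl
      have h2 : ∫ ω, Real.exp (t * W ω) ∂ℙ
          = ∫ x, Real.exp (t * (f x - E)) ∂Pm := by
        rw [← hmap, integral_map hXv.aemeasurable]
        exact (((hfmeas.sub measurable_const).const_mul t).exp).aestronglyMeasurable
      rw [h1, h2, hE, hPm]
      exact mcd_core n (fun i => (ℙ : Measure Ω).map (X i)) f hfmeas c hbd B hfB t
    calc (ℙ {ω | f (fun i => X i ω) - (∫ ω', f (fun i => X i ω') ∂ℙ) ≥ ε}).toReal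
        = (ℙ {ω | ε ≤ W ω}).toReal := by rw [hsetW]
      _ ≤ Real.exp (-t * ε) * mgf W ℙ t := hmarkov
      _ ≤ Real.exp (-t * ε) * Real.exp (t ^ 2 * S / 8) :=
          mul_le_mul_of_nonneg_left hmgf (Real.exp_pos _).le
      _ = Real.exp (-2 * ε ^ 2 / S) := by
          rw [← Real.exp_add]
          congr 1
          rw [ht]
          field_simp
          ring
end
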